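/- Let A, E be n×n complex matrices with A diagonalizable as A = X Λ X^{-1}, Λ diagonal with diagonal entries (eigenvalues) λ_1,...,λ_n. Then for every eigenvalue μ of A + E there exists some λ_i with |μ - λ_i| ≤ κ(X)·‖E‖, where κ(X) = ‖X‖·‖X^{-1}‖ (Bauer–Fike theorem). -/

import Mathlib

open Matrix

/-- The spectral (operator) norm of a square complex matrix. -/
noncomputable def opNorm {n : ℕ} (M : Matrix (Fin n) (Fin n) ℂ) : ℝ :=
  ‖Matrix.toEuclideanCLM (𝕜 := ℂ) M‖

/-- **Bauer–Fike theorem.** -/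
theorem bauer_fike (n : ℕ) (A E X : Matrix (Fin n) (Fin n) ℂ)
    (l : Fin n → ℂ) (hX : IsUnit X)
    (hA : A = X * Matrix.diagonal l * X⁻¹)
    (μ : ℂ) (v : Fin n → ℂ) (hv : v ≠ 0)
    (hμ : (A + E).mulVec v = μ • v) :
    ∃ i, ‖μ - l i‖ ≤ opNorm X * opNorm X⁻¹ * opNorm E := by
  by_contra hcon
  push_neg at hcon
  set b : ℝ := opNorm X * opNorm X⁻¹ * opNorm E with hbdef
  have hdet : IsUnit X.det := (Matrix.isUnit_iff_isUnit_det X).mp hX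
  have hXXinv : X * X⁻¹ = 1 := Matrix.mul_nonsing_inv X hdet
  have hXinvX : X⁻¹ * X = 1 := Matrix.nonsing_inv_mul X hdet
  set w : Fin n → ℂ := X⁻¹.mulVec v with hwdef
  have hXw : X.mulVec w = v := by
    rw [hwdef, Matrix.mulVec_mulVec, hXXinv, Matrix.one_mulVec]
  have hw0 : w ≠ 0 := by
    intro h
    apply hv
    rw [← hXw, h, Matrix.mulVec_zero]
  have hb0 : 0 ≤ b := by
    apply mul_nonneg (mul_nonneg _ _) <;> exact norm_nonneg _
  -- key equation : diagonal (μ - l) * w = (X⁻¹ * E * X) * w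
  have key : (Matrix.diagonal fun i => μ - l i).mulVec w = (X⁻¹ * E * X).mulVec w := by
    have h1 : X⁻¹.mulVec ((A + E).mulVec v) = μ • w := by
      rw [hμ, Matrix.mulVec_smul, hwdef]
    have h2 : X⁻¹.mulVec (A.mulVec v) = (Matrix.diagonal l).mulVec w := by
      rw [Matrix.mulVec_mulVec, hA]
      have : X⁻¹ * (X * Matrix.diagonal l * X⁻¹) = Matrix.diagonal l * X⁻¹ := by
        rw [mul_assoc, ← mul_assoc X⁻¹, hXinvX, one_mul]
      rw [this, ← Matrix.mulVec_mulVec, hwdef]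
    have h3 : X⁻¹.mulVec (E.mulVec v) = (X⁻¹ * E * X).mulVec w := by
      rw [Matrix.mulVec_mulVec, ← hXw, Matrix.mulVec_mulVec]
    have h4 : (Matrix.diagonal l).mulVec w + (X⁻¹ * E * X).mulVec w = μ • w := by
      rw [← h2, ← h3, ← Matrix.mulVec_add, ← Matrix.add_mulVec, h1]
    funext i
    have h5 := congrFun h4 i
    simp only [Pi.add_apply, Pi.smul_apply, smul_eq_mul, Matrix.mulVec_diagonal] at h5 ⊢
    linear_combination -h5
  -- move to EuclideanSpace
  set wE : EuclideanSpace ℂ (Fin n) := (WithLp.equiv 2 (Fin n → ℂ)).symm w with hwE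
  have hwE0 : wE ≠ 0 := by
    simpa [hwE] using hw0
  have hnorm_sq : ∀ (u : Fin n → ℂ),
      ‖(WithLp.equiv 2 (Fin n → ℂ)).symm u‖ ^ 2 = ∑ i, ‖u i‖ ^ 2 := by
    intro u
    rw [EuclideanSpace.norm_eq]
    rw [Real.sq_sqrt]
    · rfl
    · positivity
  -- upper bound
  have hub : ‖(WithLp.equiv 2 (Fin n → ℂ)).symm ((X⁻¹ * E * X).mulVec w)‖ ≤ b * ‖wE‖ := by
    have h1 : (WithLp.equiv 2 (Fin n → ℂ)).symm ((X⁻¹ * E * X).mulVec w)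
        = Matrix.toEuclideanCLM (𝕜 := ℂ) (X⁻¹ * E * X) wE := by
      rw [hwE]; rfl
    rw [h1]
    calc ‖Matrix.toEuclideanCLM (𝕜 := ℂ) (X⁻¹ * E * X) wE‖
        ≤ ‖Matrix.toEuclideanCLM (𝕜 := ℂ) (X⁻¹ * E * X)‖ * ‖wE‖ :=
          ContinuousLinearMap.le_opNorm _ _
      _ ≤ b * ‖wE‖ := by
          apply mul_le_mul_of_nonneg_right _ (norm_nonneg _)
          rw [_root_.map_mul, _root_.map_mul]
          calc ‖Matrix.toEuclideanCLM (𝕜 := ℂ) X⁻¹ * Matrix.toEuclideanCLM (𝕜 := ℂ) E *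
                Matrix.toEuclideanCLM (𝕜 := ℂ) X‖
              ≤ ‖Matrix.toEuclideanCLM (𝕜 := ℂ) X⁻¹ * Matrix.toEuclideanCLM (𝕜 := ℂ) E‖ *
                ‖Matrix.toEuclideanCLM (𝕜 := ℂ) X‖ := norm_mul_le _ _
            _ ≤ ‖Matrix.toEuclideanCLM (𝕜 := ℂ) X⁻¹‖ * ‖Matrix.toEuclideanCLM (𝕜 := ℂ) E‖ *
                ‖Matrix.toEuclideanCLM (𝕜 := ℂ) X‖ :=
                  mul_le_mul_of_nonneg_right (norm_mul_le _ _) (norm_nonneg _)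
            _ = b := by rw [hbdef]; simp only [opNorm]; ring
  -- lower bound
  have hlb : b * ‖wE‖ <
      ‖(WithLp.equiv 2 (Fin n → ℂ)).symm ((Matrix.diagonal fun i => μ - l i).mulVec w)‖ := by
    have hsq : (b * ‖wE‖) ^ 2 <
        ‖(WithLp.equiv 2 (Fin n → ℂ)).symm ((Matrix.diagonal fun i => μ - l i).mulVec w)‖ ^ 2 := by
      rw [mul_pow, hnorm_sq, hnorm_sq]
      rw [Finset.mul_sum]
      obtain ⟨i₀, hi₀⟩ := Function.ne_iff.mp hw0
      have hb0' : 0 ≤ opNorm X * opNorm X⁻¹ * opNorm E := hbdef ▸ hb0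
      apply Finset.sum_lt_sum
      · intro i _
        have h1 : opNorm X * opNorm X⁻¹ * opNorm E ≤ ‖μ - l i‖ := by
          exact le_of_lt (hbdef ▸ hcon i)
        have h2 : (opNorm X * opNorm X⁻¹ * opNorm E) ^ 2 ≤ ‖μ - l i‖ ^ 2 :=
          pow_le_pow_left₀ hb0' h1 2
        rw [Matrix.mulVec_diagonal, norm_mul, mul_pow]
        calc (opNorm X * opNorm X⁻¹) ^ 2 * opNorm E ^ 2 * ‖w i‖ ^ 2
            = (opNorm X * opNorm X⁻¹ * opNorm E) ^ 2 * ‖w i‖ ^ 2 := by ring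
          _ ≤ ‖μ - l i‖ ^ 2 * ‖w i‖ ^ 2 := mul_le_mul_of_nonneg_right h2 (sq_nonneg _)
          _ = (‖μ - l i‖ * ‖w i‖) ^ 2 := by ring
      · refine ⟨i₀, Finset.mem_univ i₀, ?_⟩
        simp only [Pi.zero_apply] at hi₀
        have hwpos : 0 < ‖w i₀‖ ^ 2 := pow_pos (norm_pos_iff.mpr hi₀) 2
        have h1 : opNorm X * opNorm X⁻¹ * opNorm E < ‖μ - l i₀‖ := by
          exact hbdef ▸ hcon i₀
        have h2 : (opNorm X * opNorm X⁻¹ * opNorm E) ^ 2 < ‖μ - l i₀‖ ^ 2 := by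
          apply pow_lt_pow_left₀ h1 hb0'
          norm_num
        rw [Matrix.mulVec_diagonal, norm_mul, mul_pow]
        calc (opNorm X * opNorm X⁻¹) ^ 2 * opNorm E ^ 2 * ‖w i₀‖ ^ 2
            = (opNorm X * opNorm X⁻¹ * opNorm E) ^ 2 * ‖w i₀‖ ^ 2 := by ring
          _ < ‖μ - l i₀‖ ^ 2 * ‖w i₀‖ ^ 2 := mul_lt_mul_of_pos_right h2 hwpos
          _ = (‖μ - l i₀‖ * ‖w i₀‖) ^ 2 := by ring
    exact lt_of_pow_lt_pow_left₀ 2 (norm_nonneg _) hsq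
  rw [key] at hlb
  exact absurd (lt_of_lt_of_le hlb hub) (lt_irrefl _)
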